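/- Let D be a finite set, R ⊆ D^n a nonempty n-ary relation, and 𝒟 = 𝒟(R) the digraph constructed from R. For any a ∈ D, any r = (r₁,…,rₙ) ∈ R, and any i ∈ {1,…,n}, there exists a digraph homomorphism from the oriented path Q_{{i}} to 𝒟 mapping the initial vertex of Q_{{i}} to a and the terminal vertex of Q_{{i}} to r if and only if a = r_i. -/

import Mathlib

open scoped NNRat

/-- A homomorphism between digraphs given by their edge relations. -/
def IsDigraphHom {V₁ V₂ : Type*} (E₁ : V₁ → V₁ → Prop) (E₂ : V₂ → V₂ → Prop)
    (h : V₁ → V₂) : Prop :=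
  ∀ a b, E₁ a b → E₂ (h a) (h b)

/-- Weak reachability (connectivity by oriented paths) in a digraph. -/
def WeakReach {V : Type*} (E : V → V → Prop) : V → V → Prop :=
  Relation.ReflTransGen fun a b => E a b ∨ E b a

/-- Edge relation of the direct power of a digraph. -/
def powEdge {V : Type*} (k : ℕ) (E : V → V → Prop) :
    (Fin k → V) → (Fin k → V) → Prop :=
  fun c d => ∀ i, E (c i) (d i)

/-- The directions of the edges of the oriented path `Q_S`: a single edge, then for
each `l` a single edge (if `l ∈ S`) or a zigzag (otherwise), then a single edge. -/
def QDirs (n : ℕ) (S : Finset (Fin n)) : List Bool :=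
  true :: (((List.finRange n).flatMap fun l =>
    if l ∈ S then [true] else [true, false, true]) ++ [true])

/-- The edge relation of the oriented path whose edge directions are given by `ds`;
its vertices are `0, …, ds.length`, `0` being initial and `ds.length` terminal. -/
def pathEdge (ds : List Bool) : Fin (ds.length + 1) → Fin (ds.length + 1) → Prop :=
  fun a b => ∃ i : Fin ds.length,
    if ds.get i = true then a = i.castSucc ∧ b = i.succ
    else a = i.succ ∧ b = i.castSucc

/-- The directions of the path `Q_{{i : d = r i}}` replacing the edge `(d, r)`. -/
def pathDirs {D : Type} [DecidableEq D] {n : ℕ} (d : D) (r : Fin n → D) : List Bool :=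
  QDirs n (Finset.univ.filter fun i => d = r i)

/-- Internal vertices of the copies of the paths `Q_{{i : d = r i}}` in `𝒟(R)`. -/
structure InnerVert (D : Type) [DecidableEq D] (n : ℕ) (R : Set (Fin n → D)) where
  d : D
  r : Fin n → D
  hr : r ∈ R
  j : ℕ
  hj0 : 0 < j
  hjlen : j < (pathDirs d r).length

/-- The vertex set of the digraph `𝒟(R)`: base vertices `D`, top vertices `R`, and
the internal vertices of the connecting oriented paths. -/
def DVert (D : Type) [DecidableEq D] (n : ℕ) (R : Set (Fin n → D)) : Type :=
  D ⊕ ({t : Fin n → D // t ∈ R} ⊕ InnerVert D n R)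

/-- The `j`-th vertex of the copy of the path `Q_{{i : d = t i}}` joining `d` to `t`. -/
def pathVert {D : Type} [DecidableEq D] {n : ℕ} {R : Set (Fin n → D)}
    (d : D) (t : Fin n → D) (ht : t ∈ R) (j : ℕ) : DVert D n R :=
  if hj0 : j = 0 then Sum.inl d
  else if hjl : (pathDirs d t).length ≤ j then Sum.inr (Sum.inl ⟨t, ht⟩)
  else Sum.inr (Sum.inr ⟨d, t, ht, j, Nat.pos_of_ne_zero hj0, not_le.mp hjl⟩)

/-- The edge relation of the digraph `𝒟(R)`. -/
def DEdge {D : Type} [DecidableEq D] {n : ℕ} {R : Set (Fin n → D)} :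
    DVert D n R → DVert D n R → Prop :=
  fun a b => ∃ (d : D) (t : Fin n → D) (ht : t ∈ R) (i : ℕ)
      (hi : i < (pathDirs d t).length),
    if (pathDirs d t).get ⟨i, hi⟩ = true then
      a = pathVert d t ht i ∧ b = pathVert d t ht (i + 1)
    else
      a = pathVert d t ht (i + 1) ∧ b = pathVert d t ht i

/-- A unary polymorphism of an `n`-ary relation `R`. -/
def IsUnaryPolymorphism {D : Type} {n : ℕ} (R : Set (Fin n → D)) (g : D → D) : Prop :=
  ∀ t ∈ R, (fun i => g (t i)) ∈ R

/-- The unary cost function `u` on the vertices of `𝒟(R)` associated to `ρ : R → ℚ≥0`. -/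
def uFun {D : Type} [DecidableEq D] {n : ℕ} {R : Set (Fin n → D)}
    (ρ : {t : Fin n → D // t ∈ R} → ℚ≥0) : DVert D n R → ℚ≥0 :=
  fun v => match v with
  | Sum.inl _ => 0
  | Sum.inr (Sum.inl t) => ρ t
  | Sum.inr (Sum.inr _) => 0

namespace QW

def lvl (ds : List Bool) (j : ℕ) : ℤ :=
  ((ds.take j).count true : ℤ) - ((ds.take j).count false : ℤ)

lemma lvl_zero (ds : List Bool) : lvl ds 0 = 0 := by simp [lvl]

lemma lvl_of_le (ds : List Bool) {j : ℕ} (h : ds.length ≤ j) :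
    lvl ds j = lvl ds ds.length := by
  simp [lvl, List.take_of_length_le h, List.take_length]

def tot (ds : List Bool) : ℤ := lvl ds ds.length

lemma lvl_succ (ds : List Bool) {j : ℕ} (h : j < ds.length) :
    lvl ds (j+1) = lvl ds j + (if ds.getD j true then 1 else -1) := by
  have ht : ds.take (j+1) = ds.take j ++ [ds[j]] := by
    rw [List.take_succ]; simp [List.getElem?_eq_getElem h]
  have hg : ds.getD j true = ds[j] := List.getD_eq_getElem ds true h
  rw [lvl, lvl, ht, hg]
  rcases Bool.eq_false_or_eq_true ds[j] with hb | hb <;>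
    simp [List.count_append, hb] <;> push_cast <;> ring

lemma lvl_append_left (l₁ l₂ : List Bool) {j : ℕ} (h : j ≤ l₁.length) :
    lvl (l₁ ++ l₂) j = lvl l₁ j := by
  rw [lvl, lvl, List.take_append_of_le_length h]

lemma lvl_append_right (l₁ l₂ : List Bool) (j : ℕ) :
    lvl (l₁ ++ l₂) (l₁.length + j) = tot l₁ + lvl l₂ j := by
  rw [lvl, List.take_append, tot, lvl, lvl, List.take_length]
  simp [List.count_append, List.take_of_length_le (Nat.le_add_right _ _)]; ring

lemma lvl_cons_succ (a : Bool) (l : List Bool) (j : ℕ) :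
    lvl (a :: l) (j+1) = (if a then 1 else -1) + lvl (l) j := by
  rw [lvl, lvl, List.take_succ_cons]
  rcases Bool.eq_false_or_eq_true a with hb | hb <;> subst hb <;>
    simp [List.count_cons] <;> push_cast <;> ring

lemma tot_append (l₁ l₂ : List Bool) : tot (l₁ ++ l₂) = tot l₁ + tot l₂ := by
  have := lvl_append_right l₁ l₂ l₂.length
  simpa [tot] using this

lemma tot_cons (a : Bool) (l : List Bool) :
    tot (a :: l) = (if a then 1 else -1) + tot l := by
  rw [tot]; simp only [List.length_cons]; rw [lvl_cons_succ]; rfl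


variable {n : ℕ}

def blk (S : Finset (Fin n)) (l : Fin n) : List Bool :=
  if l ∈ S then [true] else [true, false, true]

lemma tot_blk (S : Finset (Fin n)) (l : Fin n) : tot (blk S l) = 1 := by
  unfold blk; split <;> decide

lemma lvl_blk (S : Finset (Fin n)) (l : Fin n) (j : ℕ) :
    lvl (blk S l) j = 0 ∨ lvl (blk S l) j = 1 := by
  unfold blk; split
  · match j with
    | 0 => left; decide
    | (j+1) => right; rw [lvl_of_le (h := by simp)]; decide
  · match j with
    | 0 => left; decide
    | 1 => right; decide
    | 2 => left; decide
    | (j+3) => right; rw [lvl_of_le (h := by simp)]; decide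

lemma tot_flat (S : Finset (Fin n)) (ls : List (Fin n)) :
    tot (ls.flatMap (blk S)) = ls.length := by
  induction ls with
  | nil => simp [tot, lvl]
  | cons l ls ih =>
      rw [List.flatMap_cons, tot_append, tot_blk, ih]
      simp only [List.length_cons]; push_cast; ring

lemma flat_bounds (S : Finset (Fin n)) (ls : List (Fin n)) (j : ℕ) :
    0 ≤ lvl (ls.flatMap (blk S)) j ∧ lvl (ls.flatMap (blk S)) j ≤ ls.length := by
  induction ls generalizing j with
  | nil => simp [lvl]
  | cons l ls ih =>
      rw [List.flatMap_cons]
      simp only [List.length_cons]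
      rcases le_or_gt j (blk S l).length with hj | hj
      · rw [lvl_append_left _ _ hj]
        rcases lvl_blk S l j with h | h <;> rw [h] <;> constructor <;> omega
      · obtain ⟨j', rfl⟩ : ∃ j', j = (blk S l).length + j' := ⟨j - (blk S l).length, by omega⟩
        rw [lvl_append_right, tot_blk]
        rcases ih j' with ⟨h1, h2⟩
        constructor <;> omega

lemma flat_false (S : Finset (Fin n)) (ls : List (Fin n)) (j : ℕ)
    (hj : j < (ls.flatMap (blk S)).length)
    (hf : (ls.flatMap (blk S)).getD j true = false) :
    ∃ m, ∃ hm : m < ls.length, ls.get ⟨m, hm⟩ ∉ S ∧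
      lvl (ls.flatMap (blk S)) (j+1) = m := by
  induction ls generalizing j with
  | nil => simp at hj
  | cons l ls ih =>
      rw [List.flatMap_cons] at hj hf ⊢
      rcases lt_or_ge j (blk S l).length with hjb | hjb
      · rw [List.getD_append _ _ _ _ hjb] at hf
        by_cases hlS : l ∈ S
        · have hb : blk S l = [true] := by unfold blk; simp [hlS]
          rw [hb] at hjb hf
          obtain rfl : j = 0 := by simp at hjb; omega
          simp at hf
        · have hb : blk S l = [true, false, true] := by unfold blk; simp [hlS]
          rw [hb] at hjb hf
          rcases j with _|(_|(_|j))
          · simp at hf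
          · refine ⟨0, by simp, by simpa using hlS, ?_⟩
            rw [hb, lvl_append_left _ _ (by norm_num)]
            decide
          · simp at hf
          · simp only [List.length_cons, List.length_nil] at hjb; omega
      · obtain ⟨j', rfl⟩ : ∃ j', j = (blk S l).length + j' := ⟨j - (blk S l).length, by omega⟩
        rw [List.getD_append_right _ _ _ _ hjb, Nat.add_sub_cancel_left] at hf
        have hj' : j' < (ls.flatMap (blk S)).length := by
          rw [List.length_append] at hj; omega
        obtain ⟨m, hm, hmS, hml⟩ := ih j' hj' hf
        refine ⟨m+1, by simp only [List.length_cons]; omega, by simpa using hmS, ?_⟩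
        have h3 : (blk S l).length + j' + 1 = (blk S l).length + (j'+1) := by omega
        rw [h3, lvl_append_right, tot_blk, hml]
        push_cast; ring

end QW

namespace QW
variable {n : ℕ} {S : Finset (Fin n)}

lemma QDirs_eq (n : ℕ) (S : Finset (Fin n)) :
    QDirs n S = true :: ((List.finRange n).flatMap (blk S) ++ [true]) := rfl

lemma QDirs_length :
    (QDirs n S).length = ((List.finRange n).flatMap (blk S)).length + 2 := by
  rw [QDirs_eq]; simp

lemma QDirs_getD_zero : (QDirs n S).getD 0 true = true := rfl

lemma QDirs_lvl_one : lvl (QDirs n S) 1 = 1 := by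
  have h := lvl_succ (QDirs n S) (j := 0) (by rw [QDirs_length]; omega)
  rw [QDirs_getD_zero] at h
  simpa [lvl_zero] using h

lemma QDirs_tot : lvl (QDirs n S) (QDirs n S).length = (n:ℤ) + 2 := by
  have : lvl (QDirs n S) (QDirs n S).length = tot (QDirs n S) := rfl
  rw [this, QDirs_eq, tot_cons, tot_append, tot_flat]
  have h1 : tot [true] = 1 := by decide
  rw [h1]
  simp [List.length_finRange]
  ring

lemma QDirs_lvl_interior (j : ℕ) (h0 : 0 < j) (hl : j < (QDirs n S).length) :
    1 ≤ lvl (QDirs n S) j ∧ lvl (QDirs n S) j ≤ (n:ℤ) + 1 := by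
  obtain ⟨k, rfl⟩ : ∃ k, j = k + 1 := ⟨j - 1, by omega⟩
  rw [QDirs_length] at hl
  rw [QDirs_eq, lvl_cons_succ, if_pos rfl, lvl_append_left _ _ (by omega)]
  have := flat_bounds S (List.finRange n) k
  rw [List.length_finRange] at this
  constructor <;> omega

lemma QDirs_lvl_top (q : ℕ) (hq : q ≤ (QDirs n S).length)
    (h : lvl (QDirs n S) q = (n:ℤ) + 2) : q = (QDirs n S).length := by
  rcases Nat.eq_zero_or_pos q with rfl | h0
  · rw [lvl_zero] at h; omega
  rcases eq_or_lt_of_le hq with h1 | h1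
  · exact h1
  · have := QDirs_lvl_interior q h0 h1
    omega

lemma QDirs_false_land (i : Fin n) (j : ℕ) (hj : j < (QDirs n {i}).length)
    (hf : (QDirs n {i}).getD j true = false) :
    lvl (QDirs n {i}) (j+1) ≠ (i:ℤ) + 1 := by
  match j with
  | 0 => rw [QDirs_getD_zero] at hf; simp at hf
  | (k+1) =>
    rw [QDirs_eq] at hf
    rw [List.getD_cons_succ] at hf
    rw [QDirs_length] at hj
    have hk : k < ((List.finRange n).flatMap (blk {i})).length := by
      rcases lt_or_ge k ((List.finRange n).flatMap (blk {i})).length with h | h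
      · exact h
      · exfalso
        rw [List.getD_append_right _ _ _ _ h] at hf
        have hk1 : k - ((List.finRange n).flatMap (blk {i})).length = 0 := by omega
        rw [hk1] at hf
        simp at hf
    rw [List.getD_append _ _ _ _ hk] at hf
    obtain ⟨m, hm, hmS, hml⟩ := flat_false {i} (List.finRange n) k hk hf
    rw [QDirs_eq, lvl_cons_succ, if_pos rfl, lvl_append_left _ _ (by omega), hml]
    have : (List.finRange n).get ⟨m, hm⟩ = ⟨m, by simpa using hm⟩ := by
      simp [List.get_eq_getElem, List.getElem_finRange, Fin.cast]
    rw [this, Finset.mem_singleton] at hmS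
    have : m ≠ (i : ℕ) := fun hc => hmS (Fin.ext (by simpa using hc))
    omega

lemma QDirs_cut (i : Fin n) (hiS : i ∉ S) :
    ∃ c, 0 < c ∧ c ≤ (QDirs n S).length ∧ (QDirs n S).getD (c-1) true = false ∧
      lvl (QDirs n S) c = (i:ℤ) + 1 := by
  obtain ⟨l₂, hsp, hl₁⟩ : ∃ l₂, List.finRange n =
      (List.finRange n).take i.val ++ i :: l₂ ∧ ((List.finRange n).take i.val).length = i.val := by
    refine ⟨(List.finRange n).drop (i.val+1), ?_, by simp [i.isLt.le]⟩
    conv_lhs => rw [← List.take_append_drop i.val (List.finRange n)]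
    rw [List.drop_eq_getElem_cons (by simp [i.isLt])]
    congr 2
    · simp [List.getElem_finRange, Fin.cast]
  set l₁ := (List.finRange n).take i.val with hl₁def
  have hblk : blk S i = [true, false, true] := by unfold blk; simp [hiS]
  set F₁ := l₁.flatMap (blk S) with hF₁
  set F₂ := l₂.flatMap (blk S) with hF₂
  have hbody : (List.finRange n).flatMap (blk S) = F₁ ++ ([true, false, true] ++ F₂) := by
    rw [hsp, List.flatMap_append, List.flatMap_cons, hblk]
  have htotF₁ : tot F₁ = (i : ℤ) := by rw [hF₁, tot_flat, hl₁]
  refine ⟨F₁.length + 3, by omega, ?_, ?_, ?_⟩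
  · rw [QDirs_length, hbody]; simp
  · have h1 : F₁.length + 3 - 1 = (F₁.length + 1) + 1 := by omega
    rw [h1, QDirs_eq, List.getD_cons_succ, hbody, List.append_assoc]
    rw [List.getD_append_right _ _ _ _ (by omega), Nat.add_sub_cancel_left]
    rfl
  · have h1 : F₁.length + 3 = (F₁.length + 2) + 1 := by omega
    rw [h1, QDirs_eq, lvl_cons_succ, if_pos rfl, hbody]
    rw [lvl_append_left _ _ (by simp)]
    have h2 : F₁.length + 2 = F₁.length + 2 := rfl
    rw [show F₁.length + 2 = F₁.length + 2 from rfl]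
    rw [show lvl (F₁ ++ ([true, false, true] ++ F₂)) (F₁.length + 2)
        = tot F₁ + lvl ([true, false, true] ++ F₂) 2 from lvl_append_right _ _ 2]
    rw [lvl_append_left _ _ (by norm_num), htotF₁]
    have : lvl [true, false, true] 2 = 0 := by decide
    rw [this]; ring

end QW

namespace QW
variable {D : Type} [DecidableEq D] {n : ℕ} {R : Set (Fin n → D)}

lemma pathVert_zero (d : D) (t : Fin n → D) (ht : t ∈ R) :
    pathVert (R := R) d t ht 0 = Sum.inl d := by
  unfold pathVert; simp; rfl
lemma pathVert_top (d : D) (t : Fin n → D) (ht : t ∈ R) {j : ℕ} (h0 : 0 < j)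
    (hj : (pathDirs d t).length ≤ j) :
    pathVert (R := R) d t ht j = Sum.inr (Sum.inl ⟨t, ht⟩) := by
  unfold pathVert; exact (dif_neg (by omega)).trans (dif_pos hj)
lemma pathVert_inner (d : D) (t : Fin n → D) (ht : t ∈ R) {j : ℕ} (h0 : 0 < j)
    (hj : j < (pathDirs d t).length) :
    pathVert (R := R) d t ht j =
      Sum.inr (Sum.inr ⟨d, t, ht, j, h0, hj⟩) := by
  unfold pathVert; exact (dif_neg (by omega)).trans (dif_neg (by omega))
lemma pathVert_eq_inl {d : D} {t : Fin n → D} {ht : t ∈ R} {j : ℕ} {x : D}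
    (h : pathVert (R := R) d t ht j = Sum.inl x) : j = 0 ∧ d = x := by
  by_cases h1 : j = 0
  · subst h1; rw [pathVert_zero] at h; exact ⟨rfl, Sum.inl.inj h⟩
  · by_cases h2 : (pathDirs d t).length ≤ j
    · rw [pathVert_top _ _ _ (by omega) h2] at h; cases h
    · rw [pathVert_inner _ _ _ (by omega) (by omega)] at h; cases h
lemma pathVert_eq_top {d : D} {t : Fin n → D} {ht : t ∈ R} {j : ℕ} {s : {u : Fin n → D // u ∈ R}}
    (h : pathVert (R := R) d t ht j = Sum.inr (Sum.inl s)) :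
    (pathDirs d t).length ≤ j ∧ t = s.val := by
  by_cases h1 : j = 0
  · subst h1; rw [pathVert_zero] at h; cases h
  · by_cases h2 : (pathDirs d t).length ≤ j
    · rw [pathVert_top _ _ _ (by omega) h2] at h
      exact ⟨h2, congrArg Subtype.val (Sum.inl.inj (Sum.inr.inj h))⟩
    · rw [pathVert_inner _ _ _ (by omega) (by omega)] at h; cases h
lemma pathVert_eq_inner {d : D} {t : Fin n → D} {ht : t ∈ R} {j : ℕ} {w : InnerVert D n R}
    (h : pathVert (R := R) d t ht j = Sum.inr (Sum.inr w)) :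
    d = w.d ∧ t = w.r ∧ j = w.j := by
  by_cases h1 : j = 0
  · subst h1; rw [pathVert_zero] at h; cases h
  · by_cases h2 : (pathDirs d t).length ≤ j
    · rw [pathVert_top _ _ _ (by omega) h2] at h; cases h
    · rw [pathVert_inner _ _ _ (by omega) (by omega)] at h
      have h' := Sum.inr.inj (Sum.inr.inj h)
      rw [← h']; exact ⟨rfl, rfl, rfl⟩

lemma DEdge_cases {u v : DVert D n R} (e : DEdge u v) :
    ∃ (d : D) (t : Fin n → D) (ht : t ∈ R) (q : ℕ), q < (pathDirs d t).length ∧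
      (((pathDirs d t).getD q true = true ∧ u = pathVert d t ht q ∧ v = pathVert d t ht (q+1)) ∨
       ((pathDirs d t).getD q true = false ∧ u = pathVert d t ht (q+1) ∧ v = pathVert d t ht q)) := by
  obtain ⟨d, t, ht, q, hq, hif⟩ := e
  refine ⟨d, t, ht, q, hq, ?_⟩
  have hgd : (pathDirs d t).getD q true = (pathDirs d t).get ⟨q, hq⟩ := by
    rw [List.get_eq_getElem]; exact List.getD_eq_getElem _ true hq
  by_cases hb : (pathDirs d t).get ⟨q, hq⟩ = true
  · rw [if_pos hb] at hif; exact Or.inl ⟨by rw [hgd, hb], hif⟩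
  · rw [if_neg hb] at hif
    exact Or.inr ⟨by rw [hgd]; exact Bool.not_eq_true _ ▸ (Bool.eq_false_iff.mpr hb), hif⟩

lemma hom_edge {V : List Bool} {h : Fin (V.length+1) → DVert D n R}
    (hh : IsDigraphHom (pathEdge V) DEdge h) {x : ℕ} (hx : x < V.length) :
    if V.getD x true then DEdge (h ⟨x, by omega⟩) (h ⟨x+1, by omega⟩)
    else DEdge (h ⟨x+1, by omega⟩) (h ⟨x, by omega⟩) := by
  have hget : V.get ⟨x, hx⟩ = V.getD x true := by
    rw [List.get_eq_getElem]; exact (List.getD_eq_getElem V true hx).symm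
  by_cases hb : V.getD x true = true
  · rw [if_pos hb]
    apply hh
    refine ⟨⟨x, hx⟩, ?_⟩
    rw [if_pos (by rw [hget, hb])]
    constructor <;> (ext; simp)
  · rw [if_neg (by simpa using hb)]
    apply hh
    refine ⟨⟨x, hx⟩, ?_⟩
    rw [if_neg (by rw [hget]; exact hb)]
    constructor <;> (ext; simp)

def Step (W : List Bool) (b : Bool) (q q' : ℕ) : Prop :=
  (q' = q + 1 ∧ q < W.length ∧ W.getD q true = b) ∨
  (q = q' + 1 ∧ q' < W.length ∧ W.getD q' true = !b)

lemma lvl_step {W : List Bool} {b : Bool} {q q' : ℕ} (hs : Step W b q q') :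
    lvl W q' = lvl W q + (if b then 1 else -1) := by
  rcases hs with ⟨rfl, hq, hget⟩ | ⟨rfl, hq, hget⟩
  · rw [lvl_succ _ hq, hget]
  · rw [lvl_succ _ hq, hget]
    cases b <;> simp

lemma step_le {W : List Bool} {b : Bool} {q q' : ℕ} (hs : Step W b q q')
    (hq : q ≤ W.length) : q' ≤ W.length := by
  rcases hs with ⟨rfl, hq2, _⟩ | ⟨h, _, _⟩ <;> omega

lemma step_next {a : D} {r : Fin n → D} {hr : r ∈ R} {u v : DVert D n R} {q : ℕ}
    (h0 : 0 < q) (hq : q < (pathDirs a r).length)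
    (hu : u = pathVert a r hr q) (b : Bool)
    (e : if b then DEdge u v else DEdge v u) :
    ∃ q', v = pathVert a r hr q' ∧ Step (pathDirs a r) b q q' := by
  have hinner : u = Sum.inr (Sum.inr ⟨a, r, hr, q, h0, hq⟩) := by
    rw [hu, pathVert_inner a r hr h0 hq]
  cases b with
  | true =>
      rw [if_pos rfl] at e
      obtain ⟨d, t, ht, p, hp, hcs⟩ := DEdge_cases e
      rcases hcs with ⟨hlet, hu', hv'⟩ | ⟨hlet, hu', hv'⟩
      · rw [hinner] at hu'
        obtain ⟨hd, htr, hpq⟩ := pathVert_eq_inner hu'.symm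
        have hd' : d = a := hd
        have htr' : t = r := htr
        have hpq' : p = q := hpq
        subst hd'; subst htr'; subst hpq'
        refine ⟨p+1, by rw [hv'], Or.inl ⟨rfl, by omega, hlet⟩⟩
      · rw [hinner] at hu'
        obtain ⟨hd, htr, hpq⟩ := pathVert_eq_inner hu'.symm
        have hd' : d = a := hd
        have htr' : t = r := htr
        have hpq' : p + 1 = q := hpq
        subst hd'; subst htr'
        refine ⟨p, by rw [hv'], Or.inr ⟨by omega, hp, by rw [hlet]; rfl⟩⟩
  | false =>
      rw [if_neg (by simp)] at e
      obtain ⟨d, t, ht, p, hp, hcs⟩ := DEdge_cases e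
      rcases hcs with ⟨hlet, hv', hu'⟩ | ⟨hlet, hv', hu'⟩
      · rw [hinner] at hu'
        obtain ⟨hd, htr, hpq⟩ := pathVert_eq_inner hu'.symm
        have hd' : d = a := hd
        have htr' : t = r := htr
        have hpq' : p + 1 = q := hpq
        subst hd'; subst htr'
        refine ⟨p, by rw [hv'], Or.inr ⟨by omega, hp, by rw [hlet]; rfl⟩⟩
      · rw [hinner] at hu'
        obtain ⟨hd, htr, hpq⟩ := pathVert_eq_inner hu'.symm
        have hd' : d = a := hd
        have htr' : t = r := htr
        have hpq' : p = q := hpq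
        subst hd'; subst htr'; subst hpq'
        refine ⟨p+1, by rw [hv'], Or.inl ⟨rfl, by omega, hlet⟩⟩

lemma step_first {a : D} {u v : DVert D n R} (hu : u = Sum.inl a) (e : DEdge u v) :
    ∃ (r : Fin n → D) (hr : r ∈ R), v = pathVert a r hr 1 ∧ 0 < (pathDirs a r).length := by
  obtain ⟨d, t, ht, p, hp, hcs⟩ := DEdge_cases e
  rcases hcs with ⟨hlet, hu', hv'⟩ | ⟨hlet, hu', hv'⟩
  · rw [hu] at hu'
    obtain ⟨hp0, hda⟩ := pathVert_eq_inl hu'.symm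
    subst hda
    subst hp0
    exact ⟨t, ht, by rw [hv'], by omega⟩
  · rw [hu] at hu'
    obtain ⟨hp0, hda⟩ := pathVert_eq_inl hu'.symm
    omega

end QW

namespace QW

def Matches (V W : List Bool) (g : ℕ → ℕ) : Prop :=
  g 0 = 0 ∧ g V.length = W.length ∧
    ∀ j < V.length, Step W (V.getD j true) (g j) (g (j+1))

lemma Step_append_left {W₁ W₂ : List Bool} {b : Bool} {q q' : ℕ}
    (h : Step W₁ b q q') : Step (W₁ ++ W₂) b q q' := by
  rcases h with ⟨h1, h2, h3⟩ | ⟨h1, h2, h3⟩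
  · exact Or.inl ⟨h1, by simp; omega, by rw [List.getD_append _ _ _ _ h2]; exact h3⟩
  · exact Or.inr ⟨h1, by simp; omega, by rw [List.getD_append _ _ _ _ h2]; exact h3⟩

lemma Step_append_right {W₁ W₂ : List Bool} {b : Bool} {q q' : ℕ}
    (h : Step W₂ b q q') : Step (W₁ ++ W₂) b (W₁.length + q) (W₁.length + q') := by
  rcases h with ⟨h1, h2, h3⟩ | ⟨h1, h2, h3⟩
  · refine Or.inl ⟨by omega, by simp; omega, ?_⟩
    rw [List.getD_append_right _ _ _ _ (by omega), Nat.add_sub_cancel_left]; exact h3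
  · refine Or.inr ⟨by omega, by simp; omega, ?_⟩
    rw [List.getD_append_right _ _ _ _ (by omega), Nat.add_sub_cancel_left]; exact h3

lemma Matches_refl (l : List Bool) : Matches l l id := by
  refine ⟨rfl, rfl, fun j hj => Or.inl ⟨rfl, hj, rfl⟩⟩

lemma Matches_zig : Matches [true, false, true] [true] (· % 2) := by
  refine ⟨rfl, rfl, fun j hj => ?_⟩
  have hj' : j < 3 := by simpa using hj
  interval_cases j
  · exact Or.inl ⟨rfl, by norm_num, rfl⟩
  · exact Or.inr ⟨rfl, by norm_num, rfl⟩
  · exact Or.inl ⟨rfl, by norm_num, rfl⟩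

lemma Matches_append {V₁ V₂ W₁ W₂ : List Bool} {g₁ g₂ : ℕ → ℕ}
    (h₁ : Matches V₁ W₁ g₁) (h₂ : Matches V₂ W₂ g₂) :
    Matches (V₁ ++ V₂) (W₁ ++ W₂)
      (fun x => if x < V₁.length then g₁ x else W₁.length + g₂ (x - V₁.length)) := by
  obtain ⟨ha1, ha2, ha3⟩ := h₁
  obtain ⟨hb1, hb2, hb3⟩ := h₂
  have key : ∀ x ≤ V₁.length,
      (if x < V₁.length then g₁ x else W₁.length + g₂ (x - V₁.length)) = g₁ x := by
    intro x hx
    rcases lt_or_eq_of_le hx with h | h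
    · rw [if_pos h]
    · rw [if_neg (by omega), h, Nat.sub_self, hb1, ha2]; omega
  refine ⟨?_, ?_, ?_⟩
  · dsimp only
    rw [key 0 (by omega), ha1]
  · dsimp only
    rw [List.length_append, List.length_append]
    by_cases h : V₁.length + V₂.length < V₁.length
    · rw [if_pos h]; omega
    · rw [if_neg h, Nat.add_sub_cancel_left, hb2]
  · intro j hj
    dsimp only
    rw [List.length_append] at hj
    rcases lt_or_ge j V₁.length with hjl | hjl
    · rw [key j (by omega), key (j+1) (by omega), List.getD_append _ _ _ _ hjl]
      exact Step_append_left (ha3 j hjl)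
    · obtain ⟨j', rfl⟩ : ∃ j', j = V₁.length + j' := ⟨j - V₁.length, by omega⟩
      have e1 : (if V₁.length + j' < V₁.length then g₁ (V₁.length + j')
          else W₁.length + g₂ (V₁.length + j' - V₁.length)) = W₁.length + g₂ j' := by
        rw [if_neg (by omega), Nat.add_sub_cancel_left]
      have e2 : (if V₁.length + j' + 1 < V₁.length then g₁ (V₁.length + j' + 1)
          else W₁.length + g₂ (V₁.length + j' + 1 - V₁.length)) = W₁.length + g₂ (j' + 1) := by
        rw [if_neg (by omega)]
        congr 2
        omega
      rw [e1, e2, List.getD_append_right _ _ _ _ (by omega), Nat.add_sub_cancel_left]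
      exact Step_append_right (hb3 j' (by omega))

lemma Matches_flatMap {α : Type*} (ls : List α) (f₁ f₂ : α → List Bool)
    (h : ∀ l ∈ ls, ∃ g, Matches (f₁ l) (f₂ l) g) :
    ∃ g, Matches (ls.flatMap f₁) (ls.flatMap f₂) g := by
  induction ls with
  | nil => exact ⟨id, Matches_refl []⟩
  | cons l ls ih =>
      obtain ⟨g₁, hg₁⟩ := h l (by simp)
      obtain ⟨g₂, hg₂⟩ := ih (fun x hx => h x (by simp [hx]))
      rw [List.flatMap_cons, List.flatMap_cons]
      exact ⟨_, Matches_append hg₁ hg₂⟩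

lemma Matches_QDirs {n : ℕ} (i : Fin n) (S : Finset (Fin n)) (hiS : i ∈ S) :
    ∃ g, Matches (QDirs n {i}) (QDirs n S) g := by
  have hblocks : ∀ l ∈ List.finRange n, ∃ g, Matches (blk {i} l) (blk S l) g := by
    intro l _
    by_cases hl : l = i
    · subst hl
      have e1 : blk {l} l = [true] := by unfold blk; simp
      have e2 : blk S l = [true] := by unfold blk; simp [hiS]
      rw [e1, e2]; exact ⟨id, Matches_refl _⟩
    · have e1 : blk {i} l = [true, false, true] := by unfold blk; simp [hl]
      rw [e1]
      by_cases hlS : l ∈ S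
      · have e2 : blk S l = [true] := by unfold blk; simp [hlS]
        rw [e2]; exact ⟨_, Matches_zig⟩
      · have e2 : blk S l = [true, false, true] := by unfold blk; simp [hlS]
        rw [e2]; exact ⟨id, Matches_refl _⟩
  obtain ⟨g, hg⟩ := Matches_flatMap (List.finRange n) (blk {i}) (blk S) hblocks
  have e : ∀ (T : Finset (Fin n)), QDirs n T =
      [true] ++ ((List.finRange n).flatMap (blk T) ++ [true]) := fun _ => rfl
  have m2 := Matches_append (Matches_refl [true])
    (Matches_append hg (Matches_refl [true]))
  rw [← e {i}, ← e S] at m2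
  exact ⟨_, m2⟩

end QW

namespace QW

lemma step_DEdge {D : Type} [DecidableEq D] {n : ℕ} {R : Set (Fin n → D)}
    {a : D} {t : Fin n → D} {ht : t ∈ R} {q q' : ℕ} (b : Bool)
    (hs : Step (pathDirs a t) b q q') :
    if b then DEdge (R := R) (pathVert a t ht q) (pathVert a t ht q')
    else DEdge (R := R) (pathVert a t ht q') (pathVert a t ht q) := by
  rcases hs with ⟨rfl, hq, hget⟩ | ⟨rfl, hq, hget⟩
  · have hget' : (pathDirs a t)[q] = b := by
      rw [← List.getD_eq_getElem _ true hq]; exact hget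
    cases b with
    | true =>
        rw [if_pos rfl]
        refine ⟨a, t, ht, q, hq, ?_⟩
        simp only [List.get_eq_getElem]
        rw [if_pos hget']
        simp
    | false =>
        rw [if_neg (by simp)]
        refine ⟨a, t, ht, q, hq, ?_⟩
        simp only [List.get_eq_getElem]
        rw [if_neg (by simp [hget'])]
        simp
  · have hget' : (pathDirs a t)[q'] = !b := by
      rw [← List.getD_eq_getElem _ true hq]; exact hget
    cases b with
    | true =>
        rw [if_pos rfl]
        refine ⟨a, t, ht, q', hq, ?_⟩
        simp only [List.get_eq_getElem]
        rw [if_neg (by simp [hget'])]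
        simp
    | false =>
        rw [if_neg (by simp)]
        refine ⟨a, t, ht, q', hq, ?_⟩
        simp only [List.get_eq_getElem]
        rw [if_pos (by simp [hget'])]
        simp

end QW

open QW

/-- there is a homomorphism from `Q_{{i}}` to `𝒟(R)` sending the initial
vertex to `a ∈ D` and the terminal vertex to `r ∈ R` iff `a = r i`. -/
theorem hom_Qsingleton_iff {D : Type} [Fintype D] [DecidableEq D] {n : ℕ}
    (hn : 1 ≤ n) (R : Set (Fin n → D)) (hR : R.Nonempty)
    (a : D) (t : Fin n → D) (ht : t ∈ R) (i : Fin n) :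
    (∃ h : Fin ((QDirs n {i}).length + 1) → DVert D n R,
        IsDigraphHom (pathEdge (QDirs n {i})) DEdge h ∧
        h 0 = Sum.inl a ∧ h (Fin.last _) = Sum.inr (Sum.inl ⟨t, ht⟩)) ↔
      a = t i := by
  set S : Finset (Fin n) := Finset.univ.filter (fun j => a = t j) with hS
  have hpd : pathDirs a t = QDirs n S := rfl
  have hWlen : (pathDirs a t).length = ((List.finRange n).flatMap (blk S)).length + 2 := by
    rw [hpd]; exact QDirs_length
  have hVlen : (QDirs n {i}).length
      = ((List.finRange n).flatMap (blk ({i} : Finset (Fin n)))).length + 2 := QDirs_length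
  constructor
  · rintro ⟨h, hom, h0, hL⟩
    have hrfl : ∀ (r : Fin n → D), pathDirs a r = QDirs n (Finset.univ.filter fun k => a = r k) := fun _ => rfl
    have hLpos : 2 ≤ (QDirs n {i}).length := by rw [hVlen]; omega
    set H : ℕ → DVert D n R := fun x => h ⟨min x (QDirs n {i}).length, by omega⟩ with hH
    have hHeq : ∀ (x : ℕ) (hx : x ≤ (QDirs n {i}).length), H x = h ⟨x, by omega⟩ := by
      intro x hx
      show h _ = h _
      congr 1
      apply Fin.ext
      simpa using Nat.min_eq_left hx
    have hH0 : H 0 = Sum.inl a := by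
      rw [hHeq 0 (by omega),
        show (⟨0, by omega⟩ : Fin ((QDirs n {i}).length + 1)) = 0 from Fin.ext (by simp)]
      exact h0
    have hHL : H (QDirs n {i}).length = Sum.inr (Sum.inl ⟨t, ht⟩) := by
      rw [hHeq _ le_rfl,
        show (⟨(QDirs n {i}).length, by omega⟩ : Fin ((QDirs n {i}).length + 1)) = Fin.last _
          from Fin.ext (by simp)]
      exact hL
    have hedge : ∀ (x : ℕ) (hx : x < (QDirs n {i}).length),
        if (QDirs n {i}).getD x true then DEdge (H x) (H (x+1))
        else DEdge (H (x+1)) (H x) := by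
      intro x hx
      have hthis := hom_edge hom hx
      rw [hHeq x (by omega), hHeq (x+1) (by omega)]
      exact hthis
    have hV0 : (QDirs n {i}).getD 0 true = true := QDirs_getD_zero
    have e0 : DEdge (H 0) (H 1) := by
      have h1 := hedge 0 (by omega)
      rw [hV0] at h1
      simpa using h1
    obtain ⟨r, hr, hH1, hlen1⟩ := step_first hH0 e0
    have hlenr : 2 ≤ (pathDirs a r).length := by rw [hrfl r, QDirs_length]; omega
    have main : ∀ x, 1 ≤ x → x ≤ (QDirs n {i}).length → ∃ g : ℕ → ℕ, g 0 = 0 ∧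
        (∀ y, y ≤ x → H y = pathVert a r hr (g y)) ∧
        (∀ y, y ≤ x → g y ≤ (pathDirs a r).length) ∧
        (∀ y, 1 ≤ y → y ≤ x → y < (QDirs n {i}).length →
          0 < g y ∧ g y < (pathDirs a r).length) ∧
        (∀ y, y ≤ x → lvl (pathDirs a r) (g y) = lvl (QDirs n {i}) y) ∧
        (∀ y, y < x → Step (pathDirs a r) ((QDirs n {i}).getD y true) (g y) (g (y+1))) := by
      intro x
      induction x with
      | zero => omega
      | succ x ih =>
        intro _ hxL
        rcases Nat.eq_zero_or_pos x with rfl | hx1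
        · refine ⟨fun y => if y = 0 then 0 else 1, by simp, ?_, ?_, ?_, ?_, ?_⟩
          · intro y hy
            interval_cases y
            · show H 0 = pathVert a r hr 0
              rw [hH0, pathVert_zero]
            · show H 1 = pathVert a r hr 1
              exact hH1
          · intro y hy
            interval_cases y
            · show (0:ℕ) ≤ (pathDirs a r).length
              omega
            · show (1:ℕ) ≤ (pathDirs a r).length
              omega
          · intro y hy1 hy2 _
            interval_cases y
            exact ⟨Nat.one_pos, by show (1:ℕ) < (pathDirs a r).length; omega⟩
          · intro y hy
            interval_cases y
            · show lvl (pathDirs a r) 0 = lvl (QDirs n {i}) 0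
              rw [lvl_zero, lvl_zero]
            · show lvl (pathDirs a r) 1 = lvl (QDirs n {i}) 1
              rw [hrfl r, QDirs_lvl_one]
              exact QDirs_lvl_one.symm
          · intro y hy
            interval_cases y
            have hw0 : (pathDirs a r).getD 0 true = true := by
              rw [hrfl r]; exact QDirs_getD_zero
            refine Or.inl ⟨rfl, ?_, ?_⟩
            · show (0:ℕ) < (pathDirs a r).length
              omega
            · show (pathDirs a r).getD 0 true = (QDirs n {i}).getD 0 true
              rw [hV0, hw0]
        · obtain ⟨g, hgz, hgv, hgle, hgbound, hglvl, hgstep⟩ := ih (by omega) (by omega)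
          have hxL' : x < (QDirs n {i}).length := by omega
          obtain ⟨hb0, hblen⟩ := hgbound x hx1 le_rfl hxL'
          have hedgex := hedge x hxL'
          obtain ⟨q', hq'v, hq'step⟩ :=
            step_next hb0 hblen (hgv x le_rfl) ((QDirs n {i}).getD x true) hedgex
          have hlvlq' : lvl (pathDirs a r) q' = lvl (QDirs n {i}) (x+1) := by
            rw [lvl_step hq'step, hglvl x le_rfl, lvl_succ _ hxL']
          refine ⟨Function.update g (x+1) q', ?_, ?_, ?_, ?_, ?_, ?_⟩
          · rw [Function.update_of_ne (by omega)]; exact hgz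
          · intro y hy
            rcases Nat.lt_or_ge y (x+1) with h' | h'
            · rw [Function.update_of_ne (by omega)]; exact hgv y (by omega)
            · have : y = x + 1 := by omega
              subst this
              rw [Function.update_self]; exact hq'v
          · intro y hy
            rcases Nat.lt_or_ge y (x+1) with h' | h'
            · rw [Function.update_of_ne (by omega)]; exact hgle y (by omega)
            · have : y = x + 1 := by omega
              subst this
              rw [Function.update_self]
              exact step_le hq'step (hgle x le_rfl)
          · intro y hy1 hy2 hy3
            rcases Nat.lt_or_ge y (x+1) with h' | h'
            · rw [Function.update_of_ne (by omega)]; exact hgbound y hy1 (by omega) hy3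
            · have : y = x + 1 := by omega
              subst this
              rw [Function.update_self]
              have hint := QDirs_lvl_interior (S := ({i} : Finset (Fin n))) (x+1) (by omega) hy3
              rw [← hlvlq'] at hint
              have hq'le : q' ≤ (pathDirs a r).length := step_le hq'step (hgle x le_rfl)
              constructor
              · rcases Nat.eq_zero_or_pos q' with rfl | h0'
                · rw [lvl_zero] at hint; omega
                · exact h0'
              · rcases Nat.lt_or_ge q' (pathDirs a r).length with h'' | h''
                · exact h''
                · exfalso
                  have : q' = (pathDirs a r).length := by omega
                  subst this
                  rw [hrfl r, QDirs_tot] at hint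
                  omega
          · intro y hy
            rcases Nat.lt_or_ge y (x+1) with h' | h'
            · rw [Function.update_of_ne (by omega)]; exact hglvl y (by omega)
            · have : y = x + 1 := by omega
              subst this
              rw [Function.update_self]; exact hlvlq'
          · intro y hy
            rcases Nat.lt_or_ge y x with h' | h'
            · rw [Function.update_of_ne (by omega), Function.update_of_ne (by omega)]
              exact hgstep y h'
            · have : y = x := by omega
              subst this
              rw [Function.update_of_ne (by omega), Function.update_self]
              exact hq'step
    obtain ⟨g, hgz, hgv, hgle, hgbound, hglvl, hgstep⟩ :=
      main (QDirs n {i}).length (by omega) le_rfl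
    have hgLlen : g (QDirs n {i}).length = (pathDirs a r).length := by
      rw [hrfl r]
      refine QDirs_lvl_top _ ?_ ?_
      · rw [← hrfl r]; exact hgle _ le_rfl
      · rw [← hrfl r, hglvl _ le_rfl, QDirs_tot]
    have hHLr : H (QDirs n {i}).length = Sum.inr (Sum.inl ⟨r, hr⟩) := by
      rw [hgv _ le_rfl, hgLlen]
      exact pathVert_top a r hr (by omega) le_rfl
    have hsubt : (⟨r, hr⟩ : {u : Fin n → D // u ∈ R}) = ⟨t, ht⟩ :=
      Sum.inl.inj (Sum.inr.inj (hHLr.symm.trans hHL))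
    have hrt : r = t := congrArg Subtype.val hsubt
    subst hrt
    by_contra hc
    have hiS : i ∉ S := by rw [hS]; simp [hc]
    obtain ⟨c, hc0, hcle, hcletter, hclvl⟩ := QDirs_cut (S := S) i hiS
    have hfind : ∃ m, m ≤ (QDirs n {i}).length ∧ c ≤ g m :=
      ⟨(QDirs n {i}).length, le_rfl, by rw [hgLlen, hpd]; exact hcle⟩
    have hmspec := Nat.find_spec hfind
    have hm0 : Nat.find hfind ≠ 0 := by
      intro h0'
      have := hmspec.2
      rw [h0', hgz] at this
      omega
    set m := Nat.find hfind with hmdef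
    have hprev : ¬(m - 1 ≤ (QDirs n {i}).length ∧ c ≤ g (m-1)) :=
      Nat.find_min hfind (by omega)
    have hgm1lt : g (m-1) < c := by
      by_contra h'
      exact hprev ⟨by omega, by omega⟩
    have hstepm := hgstep (m-1) (by omega)
    have hm1 : m - 1 + 1 = m := by omega
    rw [hm1] at hstepm
    rcases hstepm with ⟨he1, hlt, hletter⟩ | ⟨he1, _, _⟩
    · have hgm : g m = c := by omega
      have hgm1 : g (m-1) = c - 1 := by omega
      have hVletter : (QDirs n {i}).getD (m-1) true = false := by
        rw [← hletter, hgm1, hpd]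
        exact hcletter
      have hlvlm : lvl (QDirs n {i}) m = (i:ℤ)+1 := by
        rw [← hglvl m hmspec.1, hgm, hpd]
        exact hclvl
      have := QDirs_false_land i (m-1) (by omega) hVletter
      rw [hm1] at this
      exact this hlvlm
    · omega
  · intro hai
    have hiS : i ∈ S := by rw [hS]; simp [hai]
    obtain ⟨g, hg0, hgL, hgstep⟩ := Matches_QDirs i S hiS
    refine ⟨fun x => pathVert a t ht (g x.val), ?_, ?_, ?_⟩
    · rintro u v ⟨j, hj⟩
      have hstep : Step (pathDirs a t) ((QDirs n {i}).getD j.val true) (g j.val) (g (j.val+1)) := by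
        rw [hpd]; exact hgstep j.val j.isLt
      have hget : (QDirs n {i}).get j = (QDirs n {i}).getD j.val true := by
        rw [List.get_eq_getElem]; exact (List.getD_eq_getElem _ true j.isLt).symm
      by_cases hb : (QDirs n {i}).get j = true
      · rw [if_pos hb] at hj
        obtain ⟨rfl, rfl⟩ := hj
        rw [hb] at hget
        rw [← hget] at hstep
        have := step_DEdge (ht := ht) true hstep
        rw [if_pos rfl] at this
        simpa [Fin.coe_castSucc, Fin.val_succ] using this
      · rw [if_neg hb] at hj
        obtain ⟨rfl, rfl⟩ := hj
        have hb' : (QDirs n {i}).getD j.val true = false := by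
          rw [← hget]; simpa using hb
        rw [hb'] at hstep
        have := step_DEdge (ht := ht) false hstep
        rw [if_neg (by simp)] at this
        simpa [Fin.coe_castSucc, Fin.val_succ] using this
    · show pathVert a t ht (g (0 : Fin _).val) = Sum.inl a
      rw [Fin.val_zero, hg0, pathVert_zero]
    · show pathVert a t ht (g (Fin.last _).val) = Sum.inr (Sum.inl ⟨t, ht⟩)
      rw [Fin.val_last, hgL, ← hpd]
      exact pathVert_top a t ht (by omega) le_rfl
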